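/- Let n ≥ 2 and f a permutation of {1,…,n}. The Yang–Baxter monoid S(X,r_f) of the permutation idempotent solution r_f is not right cancellative: the elements a = [x₁ x₁] and b = [x₁ x₂] of S(X,r_f) are distinct, yet a·x_q = b·x_q holds in S(X,r_f) for every 1 ≤ q ≤ n. -/

import Mathlib

noncomputable section

/-- The congruence on the free monoid generated by the defining relations
`x_j x_p = f(x_p) x_p` of the Yang–Baxter monoid `S(X, r_f)`. -/
def ybCon (n : ℕ) (f : Equiv.Perm (Fin n)) : Con (FreeMonoid (Fin n)) :=
  conGen fun a b =>
    ∃ j p : Fin n, a = FreeMonoid.of j * FreeMonoid.of p ∧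
      b = FreeMonoid.of (f p) * FreeMonoid.of p

/-- The Yang–Baxter monoid `S(X, r_f)`. -/
abbrev YBS (n : ℕ) (f : Equiv.Perm (Fin n)) := (ybCon n f).Quotient

/-- The "same last letter" congruence. -/
def lastCon (n : ℕ) : Con (FreeMonoid (Fin n)) where
  r a b := a.toList.getLast? = b.toList.getLast?
  iseqv := ⟨fun _ => rfl, Eq.symm, Eq.trans⟩
  mul' := by
    intro a b c d h1 h2
    show ((a * c).toList).getLast? = ((b * d).toList).getLast?
    rw [FreeMonoid.toList_mul, FreeMonoid.toList_mul]
    have h1' : a.toList.getLast? = b.toList.getLast? := h1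
    have h2' : c.toList.getLast? = d.toList.getLast? := h2
    rcases eq_or_ne c.toList [] with hc | hc
    · have hd : d.toList = [] := by
        rw [hc] at h2'
        cases hdl : d.toList with
        | nil => rfl
        | cons x xs => rw [hdl, List.getLast?_cons] at h2'; simp at h2'
      show (a.toList ++ c.toList).getLast? = (b.toList ++ d.toList).getLast?
      simp [hc, hd, h1']
    · have hd : d.toList ≠ [] := by
        intro hdl
        rw [hdl] at h2'
        cases hcl : c.toList with
        | nil => exact hc hcl
        | cons x xs => rw [hcl, List.getLast?_cons] at h2'; simp at h2'
      show (a.toList ++ c.toList).getLast? = (b.toList ++ d.toList).getLast?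
      rw [List.getLast?_append_of_ne_nil _ hc, List.getLast?_append_of_ne_nil _ hd, h2']

theorem ybCon_le_lastCon (n : ℕ) (f : Equiv.Perm (Fin n)) : ybCon n f ≤ lastCon n := by
  apply Con.conGen_le.mpr
  rintro a b ⟨j, p, rfl, rfl⟩
  show ([j] ++ [p] : List (Fin n)).getLast? = ([f p] ++ [p] : List (Fin n)).getLast?
  simp

/-- for `n ≥ 2` the Yang–Baxter monoid `S(X,r_f)` is not right
cancellative: `[x₁x₁] ≠ [x₁x₂]` but `[x₁x₁]·x_q = [x₁x₂]·x_q` for every `q`. -/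
theorem stmt_12 (n : ℕ) (hn : 2 ≤ n) (f : Equiv.Perm (Fin n)) :
    (ybCon n f).mk' (FreeMonoid.of ⟨0, by omega⟩ * FreeMonoid.of ⟨0, by omega⟩) ≠
      (ybCon n f).mk' (FreeMonoid.of ⟨0, by omega⟩ * FreeMonoid.of ⟨1, by omega⟩) ∧
    ∀ q : Fin n,
      (ybCon n f).mk' (FreeMonoid.of ⟨0, by omega⟩ * FreeMonoid.of ⟨0, by omega⟩) *
          (ybCon n f).mk' (FreeMonoid.of q) =
        (ybCon n f).mk' (FreeMonoid.of ⟨0, by omega⟩ * FreeMonoid.of ⟨1, by omega⟩) *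
          (ybCon n f).mk' (FreeMonoid.of q) := by
  constructor
  · intro h
    have h' : (ybCon n f) (FreeMonoid.of ⟨0, by omega⟩ * FreeMonoid.of ⟨0, by omega⟩)
        (FreeMonoid.of ⟨0, by omega⟩ * FreeMonoid.of ⟨1, by omega⟩) := by
      rw [← (ybCon n f).mk'_ker]; exact h
    have := ybCon_le_lastCon n f h'
    have : (([⟨0, by omega⟩] ++ [⟨0, by omega⟩] : List (Fin n))).getLast? =
        (([⟨0, by omega⟩] ++ [⟨1, by omega⟩] : List (Fin n))).getLast? := this
    simp at this
  · intro q
    rw [← map_mul, ← map_mul, ← Con.ker_rel (ybCon n f).mk', (ybCon n f).mk'_ker]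
    have base : ∀ j : Fin n, (ybCon n f) (FreeMonoid.of j * FreeMonoid.of q)
        (FreeMonoid.of (f q) * FreeMonoid.of q) := fun j =>
      ConGen.Rel.of _ _ ⟨j, q, rfl, rfl⟩
    have h1 := (ybCon n f).mul (Con.refl _ (FreeMonoid.of ⟨0, by omega⟩)) (base ⟨0, by omega⟩)
    have h2 := (ybCon n f).mul (Con.refl _ (FreeMonoid.of ⟨0, by omega⟩)) (base ⟨1, by omega⟩)
    exact (ybCon n f).trans (by rw [mul_assoc]; exact h1)
      (by rw [mul_assoc]; exact (ybCon n f).symm h2)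

end
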